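/- Let μ be an atomless Z^2-invariant ergodic Borel probability measure on X, and suppose μ(F) = 0, where F is the set of x in Y whose σ-component contains every point of the Z^2-orbit of x lying in Y. Then for μ-almost every x in Y, the set L(x) = {k in Z : T^k S^{-k} x ∈ Y and T^k S^{-k} x is not in the σ-component of x} contains both positive and negative elements; in particular the set K(x) = {k : T^k S^{-k} x in the σ-component of x} is finite for μ-almost all x in Y. -/

import Mathlib

open MeasureTheory Filter

/-- Configurations: `ℤ²`-indexed families of elements of `ℤ/2ℤ`. -/
abbrev Config := ℤ → ℤ → ZMod 2

/-- The three-dot relation. -/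
def threeDot (x : Config) : Prop :=
  ∀ k l : ℤ, x k l + x (k + 1) l + x k (l + 1) = 0

/-- The three-dot system `X`. -/
def Xset : Set Config := {x | threeDot x}

/-- The `ℤ²`-shift action: `shift k l x = T^k S^l x`. -/
def shift (k l : ℤ) (x : Config) : Config := fun a b => x (a + k) (b + l)

/-- The shift `T`. -/
def Tm : Config → Config := shift 1 0

/-- The shift `S`. -/
def Sm : Config → Config := shift 0 1

/-- `Y` : points of `X` with coordinate `1` at the origin. -/
def Yset : Set Config := {x | threeDot x ∧ x 0 0 = 1}

/-- The map `σ : Y → Y`, extended to all configurations: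
it equals `Tx` if `Tx` has a `1` at the origin, and `Sx` otherwise. -/
def sig (x : Config) : Config := if x 1 0 = 1 then Tm x else Sm x

/-- `Z` : points of `Y` with σ-antecedents of every depth (equivalently,
infinitely many σ-antecedents). -/
def Zset : Set Config := {x | x ∈ Yset ∧ ∀ n : ℕ, ∃ y ∈ Yset, sig^[n] y = x}

/-- `Z₂` : points of `Z` having two distinct σ-preimages in `Z`. -/
def Z2set : Set Config :=
  {x | x ∈ Zset ∧ ∃ y z, y ≠ z ∧ y ∈ Zset ∧ z ∈ Zset ∧ sig y = x ∧ sig z = x}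

/-- The σ-component of a point `x` of `Y`: points of the `ℤ²`-orbit of `x`
lying in `Y` whose forward σ-trajectory meets that of `x`. -/
def sigComp (x : Config) : Set Config :=
  {y | (∃ k l : ℤ, y = shift k l x) ∧ y ∈ Yset ∧ ∃ p q : ℕ, sig^[p] x = sig^[q] y}

/-- Aperiodicity of a configuration for the `ℤ²`-action. -/
def Aperiodic (x : Config) : Prop := ∀ k l : ℤ, shift k l x = x → k = 0 ∧ l = 0

/-- `F` : points of `Y` whose σ-component contains every point of their
`ℤ²`-orbit lying in `Y`. -/
def Fset : Set Config :=
  {x | x ∈ Yset ∧ ∀ k l : ℤ, shift k l x ∈ Yset → shift k l x ∈ sigComp x}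

/-- `L(x)` : anti-diagonal positions in `Y` but not in the σ-component of `x`. -/
def Lset (x : Config) : Set ℤ :=
  {k | shift k (-k) x ∈ Yset ∧ shift k (-k) x ∉ sigComp x}

/-- `K(x)` : anti-diagonal positions in the σ-component of `x`. -/
def Kset (x : Config) : Set ℤ := {k | shift k (-k) x ∈ sigComp x}

-- ============ basic lemmas ============
section Basic

lemma shift_apply (k l a b : ℤ) (x : Config) : shift k l x a b = x (a+k) (b+l) := rfl

lemma shift_shift (k l k' l' : ℤ) (x : Config) :
    shift k l (shift k' l' x) = shift (k+k') (l+l') x := by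
  funext a b; simp only [shift]; ring_nf

lemma shift_zero (x : Config) : shift 0 0 x = x := by
  funext a b; simp [shift]

lemma threeDot_shift {x : Config} (h : threeDot x) (k l : ℤ) : threeDot (shift k l x) := by
  intro a b
  simp only [shift]
  have := h (a+k) (b+l)
  convert this using 3 <;> ring

lemma zmod2_cases (a : ZMod 2) : a = 0 ∨ a = 1 := by revert a; decide

lemma Yset_shift {x : Config} (hx : threeDot x) {k l : ℤ} (h1 : x k l = 1) :
    shift k l x ∈ Yset := by
  refine ⟨threeDot_shift hx k l, ?_⟩
  simpa [shift] using h1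

lemma mem_Yset_iff {x : Config} (hx : threeDot x) (k l : ℤ) :
    shift k l x ∈ Yset ↔ x k l = 1 := by
  constructor
  · rintro ⟨-, h⟩; simpa [shift] using h
  · exact Yset_shift hx

end Basic
-- ============ position dynamics ============
section Pos

/-- successor position -/
def nxt (x : Config) (p : ℤ × ℤ) : ℤ × ℤ :=
  if x (p.1 + 1) p.2 = 1 then (p.1 + 1, p.2) else (p.1, p.2 + 1)

lemma zmod2_ne_one {a : ZMod 2} (h : ¬ a = 1) : a = 0 := by
  rcases zmod2_cases a with h0 | h1
  · exact h0
  · exact absurd h1 h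

lemma nxt_one {x : Config} (hx : threeDot x) {p : ℤ × ℤ} (hp : x p.1 p.2 = 1) :
    x (nxt x p).1 (nxt x p).2 = 1 := by
  unfold nxt
  by_cases h : x (p.1 + 1) p.2 = 1
  · simp [h]
  · have h3 := hx p.1 p.2
    have h0 : x (p.1+1) p.2 = 0 := zmod2_ne_one h
    rw [hp, h0] at h3
    have : x p.1 (p.2 + 1) = 1 := by
      rcases zmod2_cases (x p.1 (p.2+1)) with h' | h'
      · rw [h'] at h3; exact absurd h3 (by decide)
      · exact h'
    simpa [h]

lemma sig_shift_pos {x : Config} {p : ℤ × ℤ} :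
    sig (shift p.1 p.2 x) = shift (nxt x p).1 (nxt x p).2 x := by
  unfold sig nxt
  have e : shift p.1 p.2 x 1 0 = x (p.1+1) p.2 := by
    rw [shift_apply]; ring_nf
  by_cases h : x (p.1 + 1) p.2 = 1
  · rw [if_pos (by rw [e]; exact h), if_pos h]
    show shift 1 0 (shift p.1 p.2 x) = _
    rw [shift_shift]; norm_num [add_comm]
  · rw [if_neg (by rw [e]; exact h), if_neg h]
    show shift 0 1 (shift p.1 p.2 x) = _
    rw [shift_shift]; norm_num [add_comm]

lemma sig_iter_pos {x : Config} (hx : threeDot x) {p : ℤ × ℤ} (hp : x p.1 p.2 = 1) (t : ℕ) :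
    sig^[t] (shift p.1 p.2 x) = shift ((nxt x)^[t] p).1 ((nxt x)^[t] p).2 x
      ∧ x ((nxt x)^[t] p).1 ((nxt x)^[t] p).2 = 1 := by
  induction t with
  | zero => exact ⟨rfl, hp⟩
  | succ n ih =>
    rw [Function.iterate_succ_apply', Function.iterate_succ_apply', ih.1]
    exact ⟨sig_shift_pos, nxt_one hx ih.2⟩

lemma nxt_lvl (x : Config) (p : ℤ × ℤ) :
    (nxt x p).1 + (nxt x p).2 = p.1 + p.2 + 1 := by
  unfold nxt; split <;> simp <;> ring

lemma nxt_iter_lvl (x : Config) (p : ℤ × ℤ) (t : ℕ) :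
    ((nxt x)^[t] p).1 + ((nxt x)^[t] p).2 = p.1 + p.2 + t := by
  induction t with
  | zero => simp
  | succ n ih =>
    rw [Function.iterate_succ_apply', nxt_lvl, ih]
    push_cast; ring

lemma nxt_fst_le (x : Config) (p : ℤ × ℤ) :
    p.1 ≤ (nxt x p).1 ∧ (nxt x p).1 ≤ p.1 + 1 := by
  unfold nxt; split <;> simp

lemma nxt_fst_mono {x : Config} {p q : ℤ × ℤ} (hl : p.1 + p.2 = q.1 + q.2)
    (hf : p.1 ≤ q.1) : (nxt x p).1 ≤ (nxt x q).1 := by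
  rcases lt_or_eq_of_le hf with h | h
  · have h1 := nxt_fst_le x p
    have h2 := nxt_fst_le x q
    omega
  · have : p = q := by
      have : p.2 = q.2 := by omega
      exact Prod.ext h this
    rw [this]

lemma nxt_iter_fst_mono {x : Config} {p q : ℤ × ℤ} (hl : p.1 + p.2 = q.1 + q.2)
    (hf : p.1 ≤ q.1) (t : ℕ) : ((nxt x)^[t] p).1 ≤ ((nxt x)^[t] q).1 := by
  induction t with
  | zero => exact hf
  | succ n ih =>
    rw [Function.iterate_succ_apply', Function.iterate_succ_apply']
    refine nxt_fst_mono ?_ ih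
    rw [nxt_iter_lvl, nxt_iter_lvl, hl]

lemma nxt_iter_fst_ge (x : Config) (p : ℤ × ℤ) (t : ℕ) :
    p.1 ≤ ((nxt x)^[t] p).1 ∧ ((nxt x)^[t] p).1 ≤ p.1 + t := by
  induction t with
  | zero => simp
  | succ n ih =>
    rw [Function.iterate_succ_apply']
    have := nxt_fst_le x ((nxt x)^[n] p)
    constructor <;> [omega; omega]

/-- merge stability -/
lemma mrg_stable {x : Config} {p q : ℤ × ℤ} {t : ℕ}
    (h : (nxt x)^[t] p = (nxt x)^[t] q) (s : ℕ) (hs : t ≤ s) :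
    (nxt x)^[s] p = (nxt x)^[s] q := by
  obtain ⟨d, rfl⟩ := Nat.exists_eq_add_of_le hs
  rw [add_comm, Function.iterate_add_apply, Function.iterate_add_apply, h]

/-- squeeze: if p and r merge and q lies between them on the same level, q merges too -/
lemma mrg_squeeze {x : Config} {p q r : ℤ × ℤ}
    (hl1 : p.1 + p.2 = q.1 + q.2) (hl2 : q.1 + q.2 = r.1 + r.2)
    (h1 : p.1 ≤ q.1) (h2 : q.1 ≤ r.1) {t : ℕ}
    (h : (nxt x)^[t] p = (nxt x)^[t] r) :
    (nxt x)^[t] q = (nxt x)^[t] p := by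
  have m1 := nxt_iter_fst_mono (x := x) hl1 h1 t
  have m2 := nxt_iter_fst_mono (x := x) hl2 h2 t
  have lv1 := nxt_iter_lvl x p t
  have lv2 := nxt_iter_lvl x q t
  have hfst : ((nxt x)^[t] q).1 = ((nxt x)^[t] p).1 := by
    rw [h] at m1 ⊢
    omega
  refine Prod.ext hfst ?_
  have lvq := nxt_iter_lvl x q t
  have lvp := nxt_iter_lvl x p t
  omega

end Pos
-- ============ sigComp as equivalence ============
section Comp

lemma iter_push {u v : Config} {p q : ℕ} (h : sig^[p] u = sig^[q] v) (r : ℕ) :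
    sig^[r + p] u = sig^[r + q] v := by
  rw [Function.iterate_add_apply, Function.iterate_add_apply, h]

lemma mem_sigComp_self {x : Config} (hx : x ∈ Yset) : x ∈ sigComp x :=
  ⟨⟨0, 0, (shift_zero x).symm⟩, hx, 0, 0, rfl⟩

lemma zero_mem_Kset {x : Config} (hx : x ∈ Yset) : (0:ℤ) ∈ Kset x := by
  show shift 0 (-0) x ∈ sigComp x
  rw [neg_zero, shift_zero]
  exact mem_sigComp_self hx

lemma Kset_mem_Yset {x : Config} {k : ℤ} (hk : k ∈ Kset x) : shift k (-k) x ∈ Yset :=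
  hk.2.1

lemma Kset_mem_one {x : Config} (hx : threeDot x) {k : ℤ} (hk : k ∈ Kset x) :
    x k (-k) = 1 := (mem_Yset_iff hx _ _).1 hk.2.1

/-- key lemma: if b ∈ Kset x then K of the shifted point is K translated -/
lemma Kset_shift {x : Config} (hx : x ∈ Yset) {b : ℤ} (hb : b ∈ Kset x) :
    shift b (-b) x ∈ Yset ∧ Kset (shift b (-b) x) = {k | k + b ∈ Kset x} := by
  obtain ⟨-, hyY, p, q, hpq⟩ := hb
  refine ⟨hyY, ?_⟩
  ext k
  simp only [Kset, Set.mem_setOf_eq]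
  rw [shift_shift]
  have hind : -k + -b = -(k+b) := by ring
  rw [hind]
  constructor
  · rintro ⟨-, hzY, p', q', h'⟩
    refine ⟨⟨k + b, -(k+b), rfl⟩, hzY, p' + p, q + q', ?_⟩
    calc sig^[p' + p] x = sig^[p'] (sig^[p] x) := Function.iterate_add_apply _ _ _ _
      _ = sig^[p'] (sig^[q] (shift b (-b) x)) := by rw [hpq]
      _ = sig^[p' + q] (shift b (-b) x) := (Function.iterate_add_apply _ _ _ _).symm
      _ = sig^[q + p'] (shift b (-b) x) := by rw [add_comm p' q]
      _ = sig^[q] (sig^[p'] (shift b (-b) x)) := Function.iterate_add_apply _ _ _ _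
      _ = sig^[q] (sig^[q'] (shift (k + b) (-(k+b)) x)) := by rw [h']
      _ = sig^[q + q'] (shift (k + b) (-(k+b)) x) := (Function.iterate_add_apply _ _ _ _).symm
  · rintro ⟨-, hzY, p', q', h'⟩
    refine ⟨⟨k, -k, by rw [shift_shift, hind]⟩, hzY, p' + q, p + q', ?_⟩
    calc sig^[p' + q] (shift b (-b) x) = sig^[p'] (sig^[q] ((shift b (-b) x))) :=
            Function.iterate_add_apply _ _ _ _
      _ = sig^[p'] (sig^[p] x) := by rw [hpq]
      _ = sig^[p' + p] x := (Function.iterate_add_apply _ _ _ _).symm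
      _ = sig^[p + p'] x := by rw [add_comm]
      _ = sig^[p] (sig^[p'] x) := Function.iterate_add_apply _ _ _ _
      _ = sig^[p] (sig^[q'] (shift (k+b) (-(k+b)) x)) := by rw [h']
      _ = sig^[p + q'] (shift (k+b) (-(k+b)) x) := (Function.iterate_add_apply _ _ _ _).symm

lemma shift_eq_shift {x : Config} (hap : Aperiodic x) {a b c d : ℤ}
    (h : shift a b x = shift c d x) : a = c ∧ b = d := by
  have h2 : shift (-c) (-d) (shift a b x) = shift (-c) (-d) (shift c d x) := by rw [h]
  rw [shift_shift, shift_shift] at h2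
  norm_num at h2
  rw [shift_zero] at h2
  have := hap _ _ h2
  omega

/-- characterization of K via positions, under aperiodicity -/
lemma K_iff_mrg {x : Config} (hY : x ∈ Yset) (hap : Aperiodic x) (k : ℤ) :
    k ∈ Kset x ↔ (x k (-k) = 1 ∧ ∃ t : ℕ, (nxt x)^[t] (k,-k) = (nxt x)^[t] (0,0)) := by
  have hx : threeDot x := hY.1
  have h00 : x (0:ℤ) (0:ℤ) = 1 := hY.2
  constructor
  · intro hk
    have h1 : x k (-k) = 1 := Kset_mem_one hx hk
    obtain ⟨-, -, p, q, hpq⟩ := hk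
    have e1 := (sig_iter_pos hx (p := ((0:ℤ),(0:ℤ))) h00 p).1
    rw [shift_zero] at e1
    have e2 := (sig_iter_pos hx (p := (k,-k)) h1 q).1
    rw [e1, e2] at hpq
    have := shift_eq_shift hap hpq
    have hlv1 := nxt_iter_lvl x ((0:ℤ),(0:ℤ)) p
    have hlv2 := nxt_iter_lvl x (k,-k) q
    have hpq' : (p:ℤ) = (q:ℤ) := by
      simp only [Prod.fst, Prod.snd] at hlv1 hlv2
      omega
    have hpqn : p = q := by exact_mod_cast hpq'
    subst hpqn
    refine ⟨h1, p, ?_⟩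
    exact Prod.ext this.1.symm this.2.symm
  · rintro ⟨h1, t, ht⟩
    refine ⟨⟨k, -k, rfl⟩, Yset_shift hx h1, t, t, ?_⟩
    have e1 := (sig_iter_pos hx (p := ((0:ℤ),(0:ℤ))) h00 t).1
    rw [shift_zero] at e1
    have e2 := (sig_iter_pos hx (p := (k,-k)) h1 t).1
    rw [e1, e2, ht]

end Comp
-- ============ K unbounded both ways implies F ============
section Case4

lemma case4 {x : Config} (hY : x ∈ Yset) (hap : Aperiodic x)
    (hub : ∀ N : ℤ, ∃ k ≥ N, k ∈ Kset x) (hdb : ∀ N : ℤ, ∃ k ≤ N, k ∈ Kset x) :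
    x ∈ Fset := by
  have hx : threeDot x := hY.1
  have h00 : x (0:ℤ) (0:ℤ) = 1 := hY.2
  refine ⟨hY, ?_⟩
  intro k l hYkl
  have hkl1 : x k l = 1 := (mem_Yset_iff hx k l).1 hYkl
  -- merge of two K elements with 0
  have getmrg : ∀ j : ℤ, j ∈ Kset x → ∃ t : ℕ, (nxt x)^[t] (j,-j) = (nxt x)^[t] ((0:ℤ),(0:ℤ)) :=
    fun j hj => ((K_iff_mrg hY hap j).1 hj).2
  rcases le_or_gt 0 (k + l) with hm | hm
  · -- case m ≥ 0
    set m : ℕ := (k + l).toNat with hmdef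
    have hmz : (m : ℤ) = k + l := Int.toNat_of_nonneg hm
    obtain ⟨k2, hk2ge, hk2K⟩ := hub k
    obtain ⟨k1, hk1le, hk1K⟩ := hdb (k - (k+l))
    obtain ⟨t1, ht1⟩ := getmrg k1 hk1K
    obtain ⟨t2, ht2⟩ := getmrg k2 hk2K
    set T := max t1 t2 with hT
    have hT1 : (nxt x)^[T] (k1,-k1) = (nxt x)^[T] ((0:ℤ),(0:ℤ)) :=
      mrg_stable ht1 T (le_max_left _ _)
    have hT2 : (nxt x)^[T] (k2,-k2) = (nxt x)^[T] ((0:ℤ),(0:ℤ)) :=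
      mrg_stable ht2 T (le_max_right _ _)
    -- positions at level m
    set c : ℤ × ℤ := (nxt x)^[m] ((0:ℤ),(0:ℤ)) with hc
    set p1 : ℤ × ℤ := (nxt x)^[m] (k1,-k1) with hp1
    set p2 : ℤ × ℤ := (nxt x)^[m] (k2,-k2) with hp2
    have hmrg1 : (nxt x)^[T] p1 = (nxt x)^[T] c := by
      rw [hp1, hc, ← Function.iterate_add_apply, ← Function.iterate_add_apply]
      exact mrg_stable ht1 (T + m) (by omega)
    have hmrg2 : (nxt x)^[T] p2 = (nxt x)^[T] c := by
      rw [hp2, hc, ← Function.iterate_add_apply, ← Function.iterate_add_apply]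
      exact mrg_stable ht2 (T + m) (by omega)
    -- squeeze (k,l) between p1 and p2
    have lvl1 : p1.1 + p1.2 = (m:ℤ) := by rw [hp1]; have := nxt_iter_lvl x (k1,-k1) m; simpa using this
    have lvl2 : p2.1 + p2.2 = (m:ℤ) := by rw [hp2]; have := nxt_iter_lvl x (k2,-k2) m; simpa using this
    have hf1 : p1.1 ≤ k := by
      have := (nxt_iter_fst_ge x (k1,-k1) m).2
      simp only [hp1]
      omega
    have hf2 : k ≤ p2.1 := by
      have := (nxt_iter_fst_ge x (k2,-k2) m).1
      simp only [hp2]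
      omega
    have hmrg12 : (nxt x)^[T] p1 = (nxt x)^[T] p2 := by rw [hmrg1, hmrg2]
    have hsq : (nxt x)^[T] (k, l) = (nxt x)^[T] p1 := by
      refine mrg_squeeze ?_ ?_ hf1 hf2 hmrg12
      · simp only []; omega
      · simp only []; omega
    have hmerge : (nxt x)^[T] (k, l) = (nxt x)^[T + m] ((0:ℤ),(0:ℤ)) := by
      rw [hsq, hmrg1, hc, ← Function.iterate_add_apply]
    refine ⟨⟨k, l, rfl⟩, hYkl, T + m, T, ?_⟩
    have e1 := (sig_iter_pos hx (p := ((0:ℤ),(0:ℤ))) h00 (T + m)).1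
    rw [shift_zero] at e1
    have e2 := (sig_iter_pos hx (p := (k,l)) hkl1 T).1
    rw [e1, e2, ← hmerge]
  · -- case m < 0
    set m : ℕ := (-(k + l)).toNat with hmdef
    have hmz : (m : ℤ) = -(k+l) := Int.toNat_of_nonneg (by omega)
    set q0 : ℤ × ℤ := (nxt x)^[m] (k, l) with hq0
    have lvl0 : q0.1 + q0.2 = 0 := by
      rw [hq0]; have := nxt_iter_lvl x (k,l) m; simp only [] at this ⊢; omega
    have hq0eq : q0 = (q0.1, -q0.1) := by
      refine Prod.ext rfl ?_; simp only []; omega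
    have hq0one : x q0.1 q0.2 = 1 := (sig_iter_pos hx (p := (k,l)) hkl1 m).2
    set j : ℤ := q0.1 with hj
    obtain ⟨k2, hk2ge, hk2K⟩ := hub j
    obtain ⟨k1, hk1le, hk1K⟩ := hdb j
    obtain ⟨t1, ht1⟩ := getmrg k1 hk1K
    obtain ⟨t2, ht2⟩ := getmrg k2 hk2K
    set T := max t1 t2 with hT
    have hT1 : (nxt x)^[T] (k1,-k1) = (nxt x)^[T] ((0:ℤ),(0:ℤ)) :=
      mrg_stable ht1 T (le_max_left _ _)
    have hT2 : (nxt x)^[T] (k2,-k2) = (nxt x)^[T] ((0:ℤ),(0:ℤ)) :=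
      mrg_stable ht2 T (le_max_right _ _)
    have hmrg12 : (nxt x)^[T] (k1,-k1) = (nxt x)^[T] (k2,-k2) := by rw [hT1, hT2]
    have hsq : (nxt x)^[T] q0 = (nxt x)^[T] (k1,-k1) := by
      rw [hq0eq]
      refine mrg_squeeze (q := (j, -j)) ?_ ?_ (by simpa using hk1le) (by simpa using hk2ge) hmrg12
      · simp only []; omega
      · simp only []; omega
    have hmerge : (nxt x)^[T + m] (k, l) = (nxt x)^[T] ((0:ℤ),(0:ℤ)) := by
      rw [Function.iterate_add_apply, ← hq0, hsq, hT1]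
    refine ⟨⟨k, l, rfl⟩, hYkl, T, T + m, ?_⟩
    have e1 := (sig_iter_pos hx (p := ((0:ℤ),(0:ℤ))) h00 T).1
    rw [shift_zero] at e1
    have e2 := (sig_iter_pos hx (p := (k,l)) hkl1 (T + m)).1
    rw [e1, e2, hmerge]

end Case4
-- ============ measurability ============
section Meas

lemma measurable_eval (a b : ℤ) : Measurable (fun x : Config => x a b) :=
  (measurable_pi_apply b).comp (measurable_pi_apply a)

lemma measurable_shift (k l : ℤ) : Measurable (shift k l) := by
  apply measurable_pi_lambda
  intro a
  apply measurable_pi_lambda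
  intro b
  exact measurable_eval (a+k) (b+l)

lemma measurable_sig : Measurable sig := by
  unfold sig
  have hs : MeasurableSet {x : Config | x 1 0 = 1} :=
    (measurable_eval 1 0) (MeasurableSet.singleton 1)
  exact Measurable.ite hs (measurable_shift 1 0) (measurable_shift 0 1)

lemma measurable_sig_iter (p : ℕ) : Measurable (sig^[p]) :=
  Measurable.iterate measurable_sig p

lemma measurableSet_eqfun {f g : Config → Config} (hf : Measurable f) (hg : Measurable g) :
    MeasurableSet {x | f x = g x} := by
  have : {x | f x = g x} = ⋂ (a : ℤ) (b : ℤ), {x | f x a b = g x a b} := by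
    ext x
    simp only [Set.mem_setOf_eq, Set.mem_iInter]
    constructor
    · intro h a b; rw [h]
    · intro h; funext a b; exact h a b
  rw [this]
  refine MeasurableSet.iInter fun a => MeasurableSet.iInter fun b => ?_
  have : {x | f x a b = g x a b} = ⋃ v : ZMod 2,
      ((fun x => f x a b) ⁻¹' {v}) ∩ ((fun x => g x a b) ⁻¹' {v}) := by
    ext x; simp [Set.mem_iUnion, eq_comm]
  rw [this]
  refine MeasurableSet.iUnion fun v => MeasurableSet.inter ?_ ?_
  · exact ((measurable_eval a b).comp hf) (MeasurableSet.singleton v)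
  · exact ((measurable_eval a b).comp hg) (MeasurableSet.singleton v)

lemma measurableSet_threeDot : MeasurableSet {x : Config | threeDot x} := by
  have : {x : Config | threeDot x} =
      ⋂ (k : ℤ) (l : ℤ), {x : Config | x k l + x (k+1) l + x k (l+1) = 0} := by
    ext x; simp [threeDot]
  rw [this]
  refine MeasurableSet.iInter fun k => MeasurableSet.iInter fun l => ?_
  have hmeas : Measurable (fun x : Config => x k l + x (k+1) l + x k (l+1)) :=
    ((measurable_eval k l).add (measurable_eval (k+1) l)).add (measurable_eval k (l+1))
  exact hmeas (MeasurableSet.singleton 0)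

lemma measurableSet_Yset : MeasurableSet Yset := by
  have : Yset = {x : Config | threeDot x} ∩ {x : Config | x 0 0 = 1} := rfl
  rw [this]
  exact measurableSet_threeDot.inter ((measurable_eval 0 0) (MeasurableSet.singleton 1))

lemma measurableSet_Xset : MeasurableSet Xset := measurableSet_threeDot

/-- membership of k in Kset x, as a set of x -/
def Kmem (k : ℤ) : Set Config := {x | k ∈ Kset x}

lemma Kmem_eq (k : ℤ) : Kmem k =
    ((shift k (-k)) ⁻¹' Yset) ∩ ⋃ (p : ℕ) (q : ℕ), {x | sig^[p] x = sig^[q] (shift k (-k) x)} := by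
  ext x
  simp only [Kmem, Kset, sigComp, Set.mem_setOf_eq, Set.mem_inter_iff, Set.mem_preimage,
    Set.mem_iUnion]
  constructor
  · rintro ⟨-, hY, p, q, h⟩; exact ⟨hY, p, q, h⟩
  · rintro ⟨hY, p, q, h⟩; exact ⟨⟨k, -k, rfl⟩, hY, p, q, h⟩

lemma measurableSet_Kmem (k : ℤ) : MeasurableSet (Kmem k) := by
  rw [Kmem_eq]
  refine MeasurableSet.inter ((measurable_shift k (-k)) measurableSet_Yset) ?_
  refine MeasurableSet.iUnion fun p => MeasurableSet.iUnion fun q => ?_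
  exact measurableSet_eqfun (measurable_sig_iter p)
    ((measurable_sig_iter q).comp (measurable_shift k (-k)))

/-- measure preserving of all shifts -/
lemma mp_inv {μ : Measure Config} {f g : Config → Config} (hf : MeasurePreserving f μ μ)
    (hg : Measurable g) (hfg : ∀ x, f (g x) = x) (hgf : ∀ x, g (f x) = x) :
    MeasurePreserving g μ μ := by
  refine ⟨hg, ?_⟩
  have : Measure.map g μ = Measure.map g (Measure.map f μ) := by rw [hf.map_eq]
  rw [this, Measure.map_map hg hf.measurable]
  have : g ∘ f = id := funext hgf
  rw [this, Measure.map_id]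

lemma shift_comp (k l k' l' : ℤ) : (shift k l) ∘ (shift k' l') = shift (k + k') (l + l') := by
  funext x; exact shift_shift k l k' l' x

lemma mp_shift {μ : Measure Config} (hT : MeasurePreserving Tm μ μ)
    (hS : MeasurePreserving Sm μ μ) (k l : ℤ) : MeasurePreserving (shift k l) μ μ := by
  have hnat1 : ∀ n : ℕ, MeasurePreserving (shift n 0) μ μ := by
    intro n
    induction n with
    | zero =>
      have : (shift (0:ℤ) 0) = (id : Config → Config) := funext shift_zero
      rw [Nat.cast_zero, this]
      exact MeasurePreserving.id μ
    | succ m ih =>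
      have : shift ((m+1 : ℕ) : ℤ) 0 = (shift 1 0) ∘ (shift m 0) := by
        rw [shift_comp]; push_cast; rw [add_comm]
      rw [this]
      exact hT.comp ih
  have hnat2 : ∀ n : ℕ, MeasurePreserving (shift 0 n) μ μ := by
    intro n
    induction n with
    | zero =>
      have : (shift (0:ℤ) 0) = (id : Config → Config) := funext shift_zero
      rw [Nat.cast_zero, this]
      exact MeasurePreserving.id μ
    | succ m ih =>
      have : shift 0 ((m+1 : ℕ) : ℤ) = (shift 0 1) ∘ (shift 0 m) := by
        rw [shift_comp]; push_cast; rw [add_comm]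
      rw [this]
      exact hS.comp ih
  have h1 : ∀ k : ℤ, MeasurePreserving (shift k 0) μ μ := by
    intro k
    rcases le_or_gt 0 k with h | h
    · have : k = ((k.toNat : ℕ) : ℤ) := (Int.toNat_of_nonneg h).symm
      rw [this]; exact hnat1 _
    · refine mp_inv (hnat1 (-k).toNat) (measurable_shift k 0) ?_ ?_ <;> intro x
      · rw [shift_shift, show (((-k).toNat : ℤ) + k) = 0 from by omega]
        norm_num [shift_zero]
      · rw [shift_shift, show (k + ((-k).toNat : ℤ)) = 0 from by omega]
        norm_num [shift_zero]
  have h2 : ∀ l : ℤ, MeasurePreserving (shift 0 l) μ μ := by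
    intro l
    rcases le_or_gt 0 l with h | h
    · have : l = ((l.toNat : ℕ) : ℤ) := (Int.toNat_of_nonneg h).symm
      rw [this]; exact hnat2 _
    · refine mp_inv (hnat2 (-l).toNat) (measurable_shift 0 l) ?_ ?_ <;> intro x
      · rw [shift_shift, show (((-l).toNat : ℤ) + l) = 0 from by omega]
        norm_num [shift_zero]
      · rw [shift_shift, show (l + ((-l).toNat : ℤ)) = 0 from by omega]
        norm_num [shift_zero]
  have : shift k l = (shift k 0) ∘ (shift 0 l) := by
    rw [shift_comp]; norm_num
  rw [this]
  exact (h1 k).comp (h2 l)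

end Meas
-- ============ a.e. the antidiagonal support is unbounded both ways ============
section M2

variable {μ : Measure Config} [IsProbabilityMeasure μ]

lemma chain_mono {C : ℤ → Set Config} (hmono : ∀ J, C J ⊆ C (J+1)) :
    ∀ {i j : ℤ}, i ≤ j → C i ⊆ C j := by
  have key : ∀ (d : ℕ) (i : ℤ), C i ⊆ C (i + d) := by
    intro d
    induction d with
    | zero => intro i; simp
    | succ n ih =>
      intro i
      refine (ih i).trans ?_
      have := hmono (i + n)
      refine this.trans ?_
      rw [show (i + (n:ℤ) + 1 : ℤ) = i + ((n:ℕ)+1 : ℕ) from by push_cast; ring]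
  intro i j hij
  have := key (j - i).toNat i
  rwa [show (i + ((j - i).toNat : ℤ)) = j from by omega] at this

lemma const_chain_null (C : ℤ → Set Config) (hmeas : ∀ J, MeasurableSet (C J))
    (hmono : ∀ J, C J ⊆ C (J+1)) (hμ : ∀ J, μ (C J) = μ (C (J+1))) (J : ℤ) :
    μ (C J \ (⋂ i, C i)) = 0 := by
  have hdecomp : C J \ (⋂ i, C i) ⊆ ⋃ (n : ℕ), (C (J - n) \ C (J - (n+1))) := by
    intro x ⟨hxJ, hxn⟩
    rw [Set.mem_iInter] at hxn
    push_neg at hxn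
    obtain ⟨i, hi⟩ := hxn
    have hex : ∃ n : ℕ, x ∉ C (J - n) := by
      refine ⟨(J - i).toNat, fun hx => hi ?_⟩
      exact chain_mono hmono (by omega) hx
    classical
    have h0 : ¬ (x ∉ C (J - (0:ℕ))) := by simpa using hxJ
    set n0 := Nat.find hex with hn0
    have hn0spec : x ∉ C (J - n0) := Nat.find_spec hex
    have hn0pos : n0 ≠ 0 := fun h => h0 (by rw [← h]; exact hn0spec)
    have hprev : x ∈ C (J - (n0 - 1 : ℕ)) := by
      by_contra hc
      have := Nat.find_min hex (m := n0 - 1) (by omega)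
      exact this hc
    rw [Set.mem_iUnion]
    refine ⟨n0 - 1, hprev, ?_⟩
    rwa [show (J - (((n0 - 1 : ℕ) : ℤ) + 1) : ℤ) = J - n0 from by omega]
  refine measure_mono_null hdecomp ?_
  refine measure_iUnion_null fun n => ?_
  have hsub : C (J - (n+1)) ⊆ C (J - n) := chain_mono hmono (by omega)
  have heq : μ (C (J - (n+1))) = μ (C (J - n)) := by
    have := hμ (J - (n+1))
    rwa [show (J - ((n:ℤ)+1) + 1 : ℤ) = J - n from by ring] at this
  rw [measure_diff hsub (hmeas _).nullMeasurableSet (measure_ne_top μ _), heq, tsub_self]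

lemma M2_ae (hT : MeasurePreserving Tm μ μ) (hS : MeasurePreserving Sm μ μ) :
    ∀ᵐ x ∂μ, x 0 0 = 1 →
      (∀ N : ℤ, ∃ j ≥ N, x j (-j) = 1) ∧ (∀ N : ℤ, ∃ j ≤ N, x j (-j) = 1) := by
  classical
  set R := shift 1 (-1) with hR
  have hRmp : MeasurePreserving R μ μ := mp_shift hT hS 1 (-1)
  -- rightward chain (increasing in J)
  set C : ℤ → Set Config := fun J => {x | ∀ j : ℤ, J ≤ j → x j (-j) = 0} with hC
  have hCmeas : ∀ J, MeasurableSet (C J) := by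
    intro J
    have : C J = ⋂ (j : ℤ), ⋂ (_ : J ≤ j), {x : Config | x j (-j) = 0} := by
      ext x; simp [hC]
    rw [this]
    exact MeasurableSet.iInter fun j => MeasurableSet.iInter fun _ =>
      (measurable_eval j (-j)) (MeasurableSet.singleton 0)
  have hCpre : ∀ J, R ⁻¹' (C J) = C (J + 1) := by
    intro J
    ext x
    simp only [hC, Set.mem_preimage, Set.mem_setOf_eq, hR, shift]
    constructor
    · intro h j hj
      have := h (j - 1) (by omega)
      rwa [show (j - 1 + 1 : ℤ) = j from by ring, show (-(j-1) + -1 : ℤ) = -j from by ring] at this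
    · intro h j hj
      have := h (j + 1) (by omega)
      rwa [show (-(j+1) : ℤ) = -j + -1 from by ring] at this
  have hCμ : ∀ J, μ (C J) = μ (C (J+1)) := by
    intro J
    rw [← hCpre J]
    exact (hRmp.measure_preimage (hCmeas J).nullMeasurableSet).symm
  have hCmono : ∀ J, C J ⊆ C (J+1) := by
    intro J x hx j hj
    exact hx j (by omega)
  have hCnull : ∀ J : ℤ, μ (C J \ (⋂ i, C i)) = 0 :=
    const_chain_null C hCmeas hCmono hCμ
  -- leftward chain: D J := {x | ∀ j ≤ -J, x j (-j) = 0}, increasing in J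
  set D : ℤ → Set Config := fun J => {x | ∀ j : ℤ, j ≤ -J → x j (-j) = 0} with hD
  have hDmeas : ∀ J, MeasurableSet (D J) := by
    intro J
    have : D J = ⋂ (j : ℤ), ⋂ (_ : j ≤ -J), {x : Config | x j (-j) = 0} := by
      ext x; simp [hD]
    rw [this]
    exact MeasurableSet.iInter fun j => MeasurableSet.iInter fun _ =>
      (measurable_eval j (-j)) (MeasurableSet.singleton 0)
  have hDpre : ∀ J, R ⁻¹' (D (J+1)) = D J := by
    intro J
    ext x
    simp only [hD, Set.mem_preimage, Set.mem_setOf_eq, hR, shift]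
    constructor
    · intro h j hj
      have := h (j - 1) (by omega)
      rwa [show (j - 1 + 1 : ℤ) = j from by ring, show (-(j-1) + -1 : ℤ) = -j from by ring] at this
    · intro h j hj
      have := h (j + 1) (by omega)
      rwa [show (-(j+1) : ℤ) = -j + -1 from by ring] at this
  have hDμ : ∀ J, μ (D J) = μ (D (J+1)) := by
    intro J
    rw [← hDpre J]
    exact (hRmp.measure_preimage (hDmeas (J+1)).nullMeasurableSet)
  have hDmono : ∀ J, D J ⊆ D (J+1) := by
    intro J x hx j hj
    exact hx j (by omega)
  have hDnull : ∀ J : ℤ, μ (D J \ (⋂ i, D i)) = 0 :=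
    const_chain_null D hDmeas hDmono hDμ
  -- combine
  have hbig : μ ((⋃ J : ℤ, (C J \ (⋂ i, C i))) ∪ (⋃ J : ℤ, (D J \ (⋂ i, D i)))) = 0 := by
    refine measure_union_null ?_ ?_ <;> exact measure_iUnion_null (by intro J; first | exact hCnull J | exact hDnull J)
  have hae : ∀ᵐ x ∂μ, x ∉ ((⋃ J : ℤ, (C J \ (⋂ i, C i))) ∪ (⋃ J : ℤ, (D J \ (⋂ i, D i)))) :=
    measure_eq_zero_iff_ae_notMem.mp hbig
  refine hae.mono ?_
  intro x hx h00
  simp only [Set.mem_union, Set.mem_iUnion, not_or, not_exists] at hx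
  obtain ⟨hx1, hx2⟩ := hx
  have h0ne : x 0 (-(0:ℤ)) ≠ 0 := by
    rw [neg_zero, h00]; decide
  constructor
  · intro N
    by_contra hcon
    push_neg at hcon
    have hxC : x ∈ C N := fun j hj => zmod2_ne_one (hcon j hj)
    have hnd := hx1 N
    rw [Set.mem_diff] at hnd
    push_neg at hnd
    have hxint := hnd hxC
    rw [Set.mem_iInter] at hxint
    exact h0ne (hxint 0 0 le_rfl)
  · intro N
    by_contra hcon
    push_neg at hcon
    have hxD : x ∈ D (-N) := by
      intro j hj
      exact zmod2_ne_one (hcon j (by omega))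
    have hnd := hx2 (-N)
    rw [Set.mem_diff] at hnd
    push_neg at hnd
    have hxint := hnd hxD
    rw [Set.mem_iInter] at hxint
    exact h0ne (hxint 0 0 (by omega))

end M2
-- ============ Hopf-style argument ============
section Hopf

variable {μ : Measure Config} [IsProbabilityMeasure μ]

def UBset : Set Config := {x | ∀ N : ℤ, ∃ k : ℤ, N ≤ k ∧ k ∈ Kset x}
def DBset : Set Config := {x | ∀ N : ℤ, ∃ k : ℤ, k ≤ N ∧ k ∈ Kset x}

lemma measurableSet_UBset : MeasurableSet UBset := by
  have : UBset = ⋂ (N : ℤ), ⋃ (k : ℤ), ⋃ (_ : N ≤ k), Kmem k := by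
    ext x; simp [UBset, Kmem]
  rw [this]
  exact MeasurableSet.iInter fun N => MeasurableSet.iUnion fun k =>
    MeasurableSet.iUnion fun _ => measurableSet_Kmem k

lemma measurableSet_DBset : MeasurableSet DBset := by
  have : DBset = ⋂ (N : ℤ), ⋃ (k : ℤ), ⋃ (_ : k ≤ N), Kmem k := by
    ext x; simp [DBset, Kmem]
  rw [this]
  exact MeasurableSet.iInter fun N => MeasurableSet.iUnion fun k =>
    MeasurableSet.iUnion fun _ => measurableSet_Kmem k

lemma measurableSet_lbd (b : ℤ) : MeasurableSet {x : Config | ∀ k ∈ Kset x, b ≤ k} := by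
  have : {x : Config | ∀ k ∈ Kset x, b ≤ k} = ⋂ (k : ℤ), {x | x ∈ Kmem k → b ≤ k} := by
    ext x; simp [Kmem]
  rw [this]
  refine MeasurableSet.iInter fun k => ?_
  by_cases hbk : b ≤ k
  · have : {x : Config | x ∈ Kmem k → b ≤ k} = Set.univ := by
      ext x; simp [hbk]
    rw [this]; exact MeasurableSet.univ
  · have : {x : Config | x ∈ Kmem k → b ≤ k} = (Kmem k)ᶜ := by
      ext x; simp [hbk]
    rw [this]; exact (measurableSet_Kmem k).compl

lemma measurableSet_ubd (b : ℤ) : MeasurableSet {x : Config | ∀ k ∈ Kset x, k ≤ b} := by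
  have : {x : Config | ∀ k ∈ Kset x, k ≤ b} = ⋂ (k : ℤ), {x | x ∈ Kmem k → k ≤ b} := by
    ext x; simp [Kmem]
  rw [this]
  refine MeasurableSet.iInter fun k => ?_
  by_cases hbk : k ≤ b
  · have : {x : Config | x ∈ Kmem k → k ≤ b} = Set.univ := by
      ext x; simp [hbk]
    rw [this]; exact MeasurableSet.univ
  · have : {x : Config | x ∈ Kmem k → k ≤ b} = (Kmem k)ᶜ := by
      ext x; simp [hbk]
    rw [this]; exact (measurableSet_Kmem k).compl

lemma hopf_above (hT : MeasurePreserving Tm μ μ) (hS : MeasurePreserving Sm μ μ) :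
    μ {x | x ∈ Yset ∧ x ∈ UBset ∧ ∃ b ∈ Kset x, ∀ k ∈ Kset x, b ≤ k} = 0 := by
  classical
  set E : Set Config := Yset ∩ UBset ∩ Kmem 0 ∩ {x | ∀ k ∈ Kset x, 0 ≤ k} with hE
  have hEmeas : MeasurableSet E :=
    ((measurableSet_Yset.inter measurableSet_UBset).inter (measurableSet_Kmem 0)).inter
      (measurableSet_lbd 0)
  set A : ℤ → Set Config :=
    fun b => Yset ∩ UBset ∩ Kmem b ∩ {x | ∀ k ∈ Kset x, b ≤ k} with hA
  have hAmeas : ∀ b, MeasurableSet (A b) := fun b =>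
    ((measurableSet_Yset.inter measurableSet_UBset).inter (measurableSet_Kmem b)).inter
      (measurableSet_lbd b)
  -- A b is the pullback of E ∩ Kmem (-b)
  have hpull : ∀ b : ℤ, A b = (shift b (-b)) ⁻¹' (E ∩ Kmem (-b)) := by
    intro b
    ext x
    simp only [hA, hE, Set.mem_inter_iff, Set.mem_preimage, Set.mem_setOf_eq, Kmem]
    constructor
    · rintro ⟨⟨⟨hY, hUB⟩, hbK⟩, hmin⟩
      obtain ⟨hyY, hK⟩ := Kset_shift hY hbK
      have hmem : ∀ k : ℤ, k ∈ Kset (shift b (-b) x) ↔ k + b ∈ Kset x := by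
        intro k; rw [hK]; rfl
      refine ⟨⟨⟨⟨hyY, ?_⟩, ?_⟩, ?_⟩, ?_⟩
      · intro N
        obtain ⟨k, hk, hkK⟩ := hUB (N + b)
        exact ⟨k - b, by omega, by rw [hmem]; simpa using hkK⟩
      · exact (hmem 0).2 (by simpa using hbK)
      · intro k hk
        rw [hmem] at hk
        have := hmin _ hk
        omega
      · exact (hmem (-b)).2 (by simpa using zero_mem_Kset hY)
    · rintro ⟨⟨⟨⟨hyY, hyUB⟩, hy0⟩, hymin⟩, hyb⟩
      have hyb' : -b ∈ Kset (shift b (-b) x) := hyb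
      obtain ⟨-, hK⟩ := Kset_shift hyY hyb'
      have e : shift (-b) (-(-b)) (shift b (-b) x) = x := by
        rw [neg_neg, shift_shift]
        norm_num [shift_zero]
      rw [e] at hK
      have hmem : ∀ k : ℤ, k ∈ Kset x ↔ k + -b ∈ Kset (shift b (-b) x) := by
        intro k
        rw [hK]; rfl
      have hxY : x ∈ Yset := by
        have := (Kset_shift hyY hyb').1
        rwa [e] at this
      refine ⟨⟨⟨hxY, ?_⟩, ?_⟩, ?_⟩
      · intro N
        obtain ⟨k, hk, hkK⟩ := hyUB (N - b)
        exact ⟨k + b, by omega, by rw [hmem]; simpa using hkK⟩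
      · exact (hmem b).2 (by simpa using hy0)
      · intro k hk
        rw [hmem] at hk
        have := hymin _ hk
        omega
  have hApre : ∀ b : ℤ, μ (A b) = μ (E ∩ Kmem (-b)) := by
    intro b
    rw [hpull b]
    exact (mp_shift hT hS b (-b)).measure_preimage
      ((hEmeas.inter (measurableSet_Kmem (-b))).nullMeasurableSet)
  -- A b are pairwise disjoint
  have hdisj : Pairwise (Function.onFun Disjoint A) := by
    intro b b' hbb'
    rw [Function.onFun, Set.disjoint_left]
    rintro x ⟨⟨⟨-, -⟩, hbK⟩, hmin⟩ ⟨⟨⟨-, -⟩, hbK'⟩, hmin'⟩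
    exact hbb' (le_antisymm (hmin _ hbK') (hmin' _ hbK))
  have hsum : ∑' b : ℤ, μ (A b) = μ (⋃ b : ℤ, A b) := (measure_iUnion hdisj hAmeas).symm
  have hsumfin : ∑' b : ℤ, μ (A b) ≠ ⊤ := by
    rw [hsum]
    exact measure_ne_top μ _
  -- Borel-Cantelli
  have hsumn : ∑' n : ℕ, μ (E ∩ Kmem n) ≠ ⊤ := by
    have : ∀ n : ℕ, μ (E ∩ Kmem n) = μ (A (-(n:ℤ))) := by
      intro n
      rw [hApre]; norm_num
    refine ne_top_of_le_ne_top hsumfin ?_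
    calc ∑' n : ℕ, μ (E ∩ Kmem n) = ∑' n : ℕ, μ (A (-(n:ℤ))) := tsum_congr this
      _ ≤ ∑' b : ℤ, μ (A b) :=
          ENNReal.tsum_comp_le_tsum_of_injective (f := fun n : ℕ => (-(n:ℤ)))
            (fun n m hnm => by simpa using hnm) (fun b => μ (A b))
  have hBC : μ (Filter.limsup (fun n : ℕ => E ∩ Kmem n) Filter.atTop) = 0 :=
    measure_limsup_atTop_eq_zero hsumn
  have hEsub : E ⊆ Filter.limsup (fun n : ℕ => E ∩ Kmem n) Filter.atTop := by
    intro x hx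
    rw [Filter.mem_limsup_iff_frequently_mem, Filter.frequently_atTop]
    intro n
    obtain ⟨k, hk, hkK⟩ := hx.1.1.2 (n : ℤ)
    refine ⟨k.toNat, by omega, hx, ?_⟩
    show (k.toNat : ℤ) ∈ Kset x
    rwa [Int.toNat_of_nonneg (by omega)]
  have hEnull : μ E = 0 := measure_mono_null hEsub hBC
  -- conclude
  have htarget : {x | x ∈ Yset ∧ x ∈ UBset ∧ ∃ b ∈ Kset x, ∀ k ∈ Kset x, b ≤ k}
      ⊆ ⋃ b : ℤ, A b := by
    rintro x ⟨hY, hUB, b, hbK, hmin⟩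
    exact Set.mem_iUnion.2 ⟨b, ⟨⟨⟨hY, hUB⟩, hbK⟩, hmin⟩⟩
  refine measure_mono_null htarget ?_
  refine measure_iUnion_null fun b => ?_
  rw [hApre b]
  exact measure_mono_null Set.inter_subset_left hEnull

lemma hopf_below (hT : MeasurePreserving Tm μ μ) (hS : MeasurePreserving Sm μ μ) :
    μ {x | x ∈ Yset ∧ x ∈ DBset ∧ ∃ b ∈ Kset x, ∀ k ∈ Kset x, k ≤ b} = 0 := by
  classical
  set E : Set Config := Yset ∩ DBset ∩ Kmem 0 ∩ {x | ∀ k ∈ Kset x, k ≤ 0} with hE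
  have hEmeas : MeasurableSet E :=
    ((measurableSet_Yset.inter measurableSet_DBset).inter (measurableSet_Kmem 0)).inter
      (measurableSet_ubd 0)
  set A : ℤ → Set Config :=
    fun b => Yset ∩ DBset ∩ Kmem b ∩ {x | ∀ k ∈ Kset x, k ≤ b} with hA
  have hAmeas : ∀ b, MeasurableSet (A b) := fun b =>
    ((measurableSet_Yset.inter measurableSet_DBset).inter (measurableSet_Kmem b)).inter
      (measurableSet_ubd b)
  have hpull : ∀ b : ℤ, A b = (shift b (-b)) ⁻¹' (E ∩ Kmem (-b)) := by
    intro b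
    ext x
    simp only [hA, hE, Set.mem_inter_iff, Set.mem_preimage, Set.mem_setOf_eq, Kmem]
    constructor
    · rintro ⟨⟨⟨hY, hDB⟩, hbK⟩, hmax⟩
      obtain ⟨hyY, hK⟩ := Kset_shift hY hbK
      have hmem : ∀ k : ℤ, k ∈ Kset (shift b (-b) x) ↔ k + b ∈ Kset x := by
        intro k; rw [hK]; rfl
      refine ⟨⟨⟨⟨hyY, ?_⟩, ?_⟩, ?_⟩, ?_⟩
      · intro N
        obtain ⟨k, hk, hkK⟩ := hDB (N + b)
        exact ⟨k - b, by omega, by rw [hmem]; simpa using hkK⟩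
      · exact (hmem 0).2 (by simpa using hbK)
      · intro k hk
        rw [hmem] at hk
        have := hmax _ hk
        omega
      · exact (hmem (-b)).2 (by simpa using zero_mem_Kset hY)
    · rintro ⟨⟨⟨⟨hyY, hyDB⟩, hy0⟩, hymax⟩, hyb⟩
      have hyb' : -b ∈ Kset (shift b (-b) x) := hyb
      obtain ⟨-, hK⟩ := Kset_shift hyY hyb'
      have e : shift (-b) (-(-b)) (shift b (-b) x) = x := by
        rw [neg_neg, shift_shift]
        norm_num [shift_zero]
      rw [e] at hK
      have hmem : ∀ k : ℤ, k ∈ Kset x ↔ k + -b ∈ Kset (shift b (-b) x) := by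
        intro k
        rw [hK]; rfl
      have hxY : x ∈ Yset := by
        have := (Kset_shift hyY hyb').1
        rwa [e] at this
      refine ⟨⟨⟨hxY, ?_⟩, ?_⟩, ?_⟩
      · intro N
        obtain ⟨k, hk, hkK⟩ := hyDB (N - b)
        exact ⟨k + b, by omega, by rw [hmem]; simpa using hkK⟩
      · exact (hmem b).2 (by simpa using hy0)
      · intro k hk
        rw [hmem] at hk
        have := hymax _ hk
        omega
  have hApre : ∀ b : ℤ, μ (A b) = μ (E ∩ Kmem (-b)) := by
    intro b
    rw [hpull b]
    exact (mp_shift hT hS b (-b)).measure_preimage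
      ((hEmeas.inter (measurableSet_Kmem (-b))).nullMeasurableSet)
  have hdisj : Pairwise (Function.onFun Disjoint A) := by
    intro b b' hbb'
    rw [Function.onFun, Set.disjoint_left]
    rintro x ⟨⟨⟨-, -⟩, hbK⟩, hmax⟩ ⟨⟨⟨-, -⟩, hbK'⟩, hmax'⟩
    exact hbb' (le_antisymm (hmax' _ hbK) (hmax _ hbK'))
  have hsum : ∑' b : ℤ, μ (A b) = μ (⋃ b : ℤ, A b) := (measure_iUnion hdisj hAmeas).symm
  have hsumfin : ∑' b : ℤ, μ (A b) ≠ ⊤ := by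
    rw [hsum]
    exact measure_ne_top μ _
  have hsumn : ∑' n : ℕ, μ (E ∩ Kmem (-(n:ℤ))) ≠ ⊤ := by
    have : ∀ n : ℕ, μ (E ∩ Kmem (-(n:ℤ))) = μ (A (n:ℤ)) := by
      intro n
      rw [hApre]
    refine ne_top_of_le_ne_top hsumfin ?_
    calc ∑' n : ℕ, μ (E ∩ Kmem (-(n:ℤ))) = ∑' n : ℕ, μ (A (n:ℤ)) := tsum_congr this
      _ ≤ ∑' b : ℤ, μ (A b) :=
          ENNReal.tsum_comp_le_tsum_of_injective (f := fun n : ℕ => ((n:ℤ)))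
            (fun n m hnm => by simpa using hnm) (fun b => μ (A b))
  have hBC : μ (Filter.limsup (fun n : ℕ => E ∩ Kmem (-(n:ℤ))) Filter.atTop) = 0 :=
    measure_limsup_atTop_eq_zero hsumn
  have hEsub : E ⊆ Filter.limsup (fun n : ℕ => E ∩ Kmem (-(n:ℤ))) Filter.atTop := by
    intro x hx
    rw [Filter.mem_limsup_iff_frequently_mem, Filter.frequently_atTop]
    intro n
    obtain ⟨k, hk, hkK⟩ := hx.1.1.2 (-(n : ℤ))
    refine ⟨(-k).toNat, by omega, hx, ?_⟩
    show (-((-k).toNat : ℤ)) ∈ Kset x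
    rwa [Int.toNat_of_nonneg (by omega), neg_neg]
  have hEnull : μ E = 0 := measure_mono_null hEsub hBC
  have htarget : {x | x ∈ Yset ∧ x ∈ DBset ∧ ∃ b ∈ Kset x, ∀ k ∈ Kset x, k ≤ b}
      ⊆ ⋃ b : ℤ, A b := by
    rintro x ⟨hY, hDB, b, hbK, hmax⟩
    exact Set.mem_iUnion.2 ⟨b, ⟨⟨⟨hY, hDB⟩, hbK⟩, hmax⟩⟩
  refine measure_mono_null htarget ?_
  refine measure_iUnion_null fun b => ?_
  rw [hApre b]
  exact measure_mono_null Set.inter_subset_left hEnull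

end Hopf
-- ============ aperiodicity: recurrences ============
section Rec

lemma zmod2_add_self (a : ZMod 2) : a + a = 0 := by
  rcases zmod2_cases a with h | h <;> rw [h] <;> decide

lemma zmod2_eq_one {a : ZMod 2} (h : a ≠ 0) : a = 1 := by
  rcases zmod2_cases a with h' | h'
  · exact absurd h' h
  · exact h'

lemma upD {x : Config} (hx : threeDot x) (a b : ℤ) : x a (b+1) = x a b + x (a+1) b := by
  have h := hx a b
  have := zmod2_add_self (x a b + x (a+1) b)
  calc x a (b+1) = 0 + x a (b+1) := by rw [zero_add]
    _ = (x a b + x (a+1) b + (x a b + x (a+1) b)) + x a (b+1) := by rw [this]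
    _ = (x a b + x (a+1) b) + (x a b + x (a+1) b + x a (b+1)) := by ring
    _ = (x a b + x (a+1) b) + 0 := by rw [h]
    _ = x a b + x (a+1) b := by rw [add_zero]

lemma antider {x : Config} (hx : threeDot x) (n : ℕ) (a b : ℤ) :
    x a (b + n) = ∑ i ∈ Finset.range (n+1), (Nat.choose n i : ZMod 2) * x (a + i) b := by
  induction n generalizing a with
  | zero => simp
  | succ n ih =>
    have e1 : (b + ((n:ℤ)+1)) = (b + n) + 1 := by ring
    have step : x a (b + ((n:ℕ)+1:ℕ)) = x a (b+n) + x (a+1) (b+n) := by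
      push_cast
      rw [e1]
      exact upD hx a (b + n)
    rw [step, ih a, ih (a+1)]
    -- RHS manipulation
    have reindex : ∑ i ∈ Finset.range (n+1), (Nat.choose n i : ZMod 2) * x ((a+1) + i) b
        = ∑ i ∈ Finset.range (n+1), (Nat.choose n i : ZMod 2) * x (a + (i+1:ℕ)) b := by
      refine Finset.sum_congr rfl fun i _ => ?_
      congr 1
      push_cast
      ring_nf
    rw [reindex]
    rw [Finset.sum_range_succ' (fun i => (Nat.choose (n+1) i : ZMod 2) * x (a + i) b) (n+1)]
    have pascal : ∀ i : ℕ, (Nat.choose (n+1) (i+1) : ZMod 2) = Nat.choose n i + Nat.choose n (i+1) := by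
      intro i
      rw [Nat.choose_succ_succ]
      push_cast
      ring
    have expand : ∑ i ∈ Finset.range (n+1), (Nat.choose (n+1) (i+1) : ZMod 2) * x (a + (i+1:ℕ)) b
        = ∑ i ∈ Finset.range (n+1), (Nat.choose n i : ZMod 2) * x (a + (i+1:ℕ)) b
          + ∑ i ∈ Finset.range (n+1), (Nat.choose n (i+1) : ZMod 2) * x (a + (i+1:ℕ)) b := by
      rw [← Finset.sum_add_distrib]
      refine Finset.sum_congr rfl fun i _ => ?_
      rw [pascal i, add_mul]
    rw [expand]
    have last0 : ∑ i ∈ Finset.range (n+1), (Nat.choose n (i+1) : ZMod 2) * x (a + (i+1:ℕ)) b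
        = ∑ i ∈ Finset.range n, (Nat.choose n (i+1) : ZMod 2) * x (a + (i+1:ℕ)) b := by
      rw [Finset.sum_range_succ]
      norm_num
    have first : ∑ i ∈ Finset.range (n+1), (Nat.choose n i : ZMod 2) * x (a + i) b
        = ∑ i ∈ Finset.range n, (Nat.choose n (i+1) : ZMod 2) * x (a + (i+1:ℕ)) b
          + (Nat.choose n 0 : ZMod 2) * x (a + (0:ℕ)) b := by
      rw [Finset.sum_range_succ' (fun i => (Nat.choose n i : ZMod 2) * x (a + i) b) n]
    rw [last0, first]
    simp only [Nat.choose_zero_right, Nat.cast_one, one_mul]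
    push_cast
    ring

lemma rec_unique (c : ℤ → ZMod 2) (s : Finset ℤ) (hsupp : ∀ i, c i ≠ 0 → i ∈ s)
    (M m : ℤ) (hM : c M ≠ 0) (hm : c m ≠ 0)
    (hMtop : ∀ i, c i ≠ 0 → i ≤ M) (hmbot : ∀ i, c i ≠ 0 → m ≤ i)
    (r : ℤ → ZMod 2) (hr : ∀ a : ℤ, ∑ i ∈ s, c i * r (a+i) = 0)
    (hwin : ∀ b : ℤ, 0 ≤ b → b < M - m → r b = 0) : ∀ b, r b = 0 := by
  have hmM : m ≤ M := hMtop m hm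
  have hM1 : c M = 1 := zmod2_eq_one hM
  have hm1 : c m = 1 := zmod2_eq_one hm
  have key : ∀ n : ℕ, ∀ b : ℤ, -(n:ℤ) ≤ b → b < M - m + n → r b = 0 := by
    intro n
    induction n with
    | zero => intro b h1 h2; exact hwin b (by omega) (by omega)
    | succ n ih =>
      intro b h1 h2
      by_cases hin : -(n:ℤ) ≤ b ∧ b < M - m + n
      · exact ih b hin.1 hin.2
      · push_neg at hin
        rcases le_or_gt (-(n:ℤ)) b with hb1 | hb1
        · -- top case : b = M - m + n
          have hbeq : b = M - m + n := by
            have := hin hb1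
            omega
          have h0 := hr (b - M)
          have hsingle : ∑ i ∈ s, c i * r (b - M + i) = c M * r (b - M + M) := by
            refine Finset.sum_eq_single_of_mem M (hsupp M hM) ?_
            intro i hi hiM
            by_cases hci : c i = 0
            · rw [hci, zero_mul]
            · have hile : i ≤ M := hMtop i hci
              have hige : m ≤ i := hmbot i hci
              have : r (b - M + i) = 0 := by
                refine ih _ (by omega) (by omega)
              rw [this, mul_zero]
          rw [hsingle] at h0
          have : r (b - M + M) = 0 := by
            rwa [hM1, one_mul] at h0
          rwa [show (b - M + M) = b from by ring] at this
        · -- bottom case : b = -(n+1)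
          have hbeq : b = -(n:ℤ) - 1 := by omega
          have h0 := hr (b - m)
          have hsingle : ∑ i ∈ s, c i * r (b - m + i) = c m * r (b - m + m) := by
            refine Finset.sum_eq_single_of_mem m (hsupp m hm) ?_
            intro i hi him
            by_cases hci : c i = 0
            · rw [hci, zero_mul]
            · have hile : i ≤ M := hMtop i hci
              have hige : m ≤ i := hmbot i hci
              have : r (b - m + i) = 0 := by
                refine ih _ (by omega) (by omega)
              rw [this, mul_zero]
          rw [hsingle] at h0
          have : r (b - m + m) = 0 := by
            rwa [hm1, one_mul] at h0
          rwa [show (b - m + m) = b from by ring] at this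
  intro b
  exact key (b.natAbs + (M - m).natAbs + 1) b (by omega) (by omega)

end Rec
-- ============ periodic configurations are countable : main case ============
section PerMain

def Per (k l : ℤ) : Set Config := {x | shift k l x = x}

lemma per_neg {x : Config} {k l : ℤ} (h : x ∈ Per k l) : x ∈ Per (-k) (-l) := by
  have : shift (-k) (-l) (shift k l x) = shift (-k) (-l) x := by rw [h]
  rw [shift_shift] at this
  norm_num at this
  rw [shift_zero] at this
  exact this.symm

lemma per_iterate {x : Config} {k l : ℤ} (h : x ∈ Per k l) (t : ℤ) :
    shift (t*k) (t*l) x = x := by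
  induction t using Int.induction_on with
  | zero => norm_num [shift_zero]
  | succ n ih =>
    have : shift (((n:ℤ)+1)*k) (((n:ℤ)+1)*l) x = shift ((n:ℤ)*k) ((n:ℤ)*l) (shift k l x) := by
      rw [shift_shift]; ring_nf
    rw [this, h, ih]
  | pred n ih =>
    have hneg : shift (-k) (-l) x = x := per_neg h
    have : shift ((-(n:ℤ)-1)*k) ((-(n:ℤ)-1)*l) x = shift ((-(n:ℤ))*k) ((-(n:ℤ))*l) (shift (-k) (-l) x) := by
      rw [shift_shift]; ring_nf
    rw [this, hneg, ih]

lemma countable_main (k l : ℤ) (hl : 0 < l) (hk : k ≠ 0) (hkl : k + l ≠ 0) :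
    (Xset ∩ Per k l).Countable := by
  classical
  set L : ℕ := l.toNat with hLdef
  have hL : (L:ℤ) = l := Int.toNat_of_nonneg (by omega)
  have hL1 : 1 ≤ L := by omega
  set c : ℤ → ZMod 2 := fun i =>
    (if 0 ≤ i - k ∧ i - k ≤ (L:ℤ) then ((L.choose (i-k).toNat : ℕ) : ZMod 2) else 0)
      + (if i = 0 then 1 else 0) with hc
  set s : Finset ℤ := insert 0 ((Finset.range (L+1)).image (fun i : ℕ => k + (i:ℤ))) with hs
  have hmemim : ∀ i : ℤ, 0 ≤ i - k ∧ i - k ≤ (L:ℤ) →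
      i ∈ (Finset.range (L+1)).image (fun i : ℕ => k + (i:ℤ)) := by
    intro i hi
    refine Finset.mem_image.2 ⟨(i - k).toNat, Finset.mem_range.2 (by omega), by omega⟩
  have hsupp : ∀ i, c i ≠ 0 → i ∈ s := by
    intro i hci
    by_cases him : 0 ≤ i - k ∧ i - k ≤ (L:ℤ)
    · exact Finset.mem_insert.2 (Or.inr (hmemim i him))
    · by_cases hi0 : i = 0
      · exact Finset.mem_insert.2 (Or.inl hi0)
      · exfalso; apply hci
        simp only [hc]
        rw [if_neg him, if_neg hi0, add_zero]
  -- the two distinguished coefficients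
  set M : ℤ := max (k+l) 0 with hMdef
  set m : ℤ := min k 0 with hmdef
  have hchoose_last : ((L.choose L : ℕ) : ZMod 2) = 1 := by rw [Nat.choose_self]; norm_num
  have hchoose_zero : ((L.choose 0 : ℕ) : ZMod 2) = 1 := by rw [Nat.choose_zero_right]; norm_num
  have hcM : c M ≠ 0 := by
    rw [hc]
    rcases lt_or_gt_of_ne hkl with hneg | hpos
    · have hM0 : M = 0 := by omega
      rw [hM0]
      have : ¬ (0 ≤ (0:ℤ) - k ∧ (0:ℤ) - k ≤ (L:ℤ)) := by omega
      simp only [this, if_false, if_pos rfl, zero_add]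
      decide
    · have hM0 : M = k + l := by omega
      rw [hM0]
      have h1 : 0 ≤ (k + l) - k ∧ (k+l) - k ≤ (L:ℤ) := by omega
      have h2 : ((k+l) - k).toNat = L := by omega
      have h3 : ¬ (k + l = 0) := hkl
      simp only [h1, and_self, if_true, h2, hchoose_last, h3, if_false, add_zero]
      decide
  have hcm : c m ≠ 0 := by
    rw [hc]
    rcases lt_or_gt_of_ne hk with hneg | hpos
    · have hm0 : m = k := by omega
      rw [hm0]
      have h1 : 0 ≤ k - k ∧ k - k ≤ (L:ℤ) := by omega
      have h2 : (k - k).toNat = 0 := by omega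
      have h3 : ¬ (k = 0) := hk
      simp only [h1, and_self, if_true, h2, hchoose_zero, h3, if_false, add_zero]
      decide
    · have hm0 : m = 0 := by omega
      rw [hm0]
      have : ¬ (0 ≤ (0:ℤ) - k ∧ (0:ℤ) - k ≤ (L:ℤ)) := by omega
      simp only [this, if_false, if_pos rfl, zero_add]
      decide
  have hMtop : ∀ i, c i ≠ 0 → i ≤ M := by
    intro i hci
    by_contra hgt
    apply hci
    have h1 : ¬ (0 ≤ i - k ∧ i - k ≤ (L:ℤ)) := by omega
    have h2 : ¬ (i = 0) := by omega
    simp only [hc]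
    rw [if_neg h1, if_neg h2, add_zero]
  have hmbot : ∀ i, c i ≠ 0 → m ≤ i := by
    intro i hci
    by_contra hlt
    apply hci
    have h1 : ¬ (0 ≤ i - k ∧ i - k ≤ (L:ℤ)) := by omega
    have h2 : ¬ (i = 0) := by omega
    simp only [hc]
    rw [if_neg h1, if_neg h2, add_zero]
  -- every configuration in the set has a row satisfying the recurrence
  have hrowrec : ∀ x ∈ Xset ∩ Per k l, ∀ a : ℤ, ∑ i ∈ s, c i * x (a + i) 0 = 0 := by
    rintro x ⟨hx3, hxp⟩ a
    have hsplit : ∑ i ∈ s, c i * x (a + i) 0 =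
        (∑ i ∈ s, (if 0 ≤ i - k ∧ i - k ≤ (L:ℤ) then ((L.choose (i-k).toNat : ℕ) : ZMod 2) else 0) * x (a + i) 0)
        + (∑ i ∈ s, (if i = 0 then (1:ZMod 2) else 0) * x (a + i) 0) := by
      rw [← Finset.sum_add_distrib]
      refine Finset.sum_congr rfl fun i _ => ?_
      rw [hc, add_mul]
    have hpart2 : ∑ i ∈ s, (if i = 0 then (1:ZMod 2) else 0) * x (a + i) 0 = x a 0 := by
      rw [Finset.sum_eq_single_of_mem 0 (Finset.mem_insert.2 (Or.inl rfl))]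
      · norm_num
      · intro i _ hi0
        simp [hi0]
    have hpart1 : ∑ i ∈ s, (if 0 ≤ i - k ∧ i - k ≤ (L:ℤ) then ((L.choose (i-k).toNat : ℕ) : ZMod 2) else 0) * x (a + i) 0
        = x (a + k) (0 + (L:ℕ)) := by
      have hinjim : ∀ p ∈ Finset.range (L+1), ∀ q ∈ Finset.range (L+1),
          (fun i : ℕ => k + (i:ℤ)) p = (fun i : ℕ => k + (i:ℤ)) q → p = q := by
        intro p _ q _ h
        simp only [add_right_inj, Nat.cast_inj] at h
        exact h
      calc ∑ i ∈ s, (if 0 ≤ i - k ∧ i - k ≤ (L:ℤ) then ((L.choose (i-k).toNat : ℕ) : ZMod 2) else 0) * x (a + i) 0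
          = ∑ i ∈ (Finset.range (L+1)).image (fun i : ℕ => k + (i:ℤ)),
              (if 0 ≤ i - k ∧ i - k ≤ (L:ℤ) then ((L.choose (i-k).toNat : ℕ) : ZMod 2) else 0) * x (a + i) 0 := by
            rw [hs]
            refine Finset.sum_insert_of_eq_zero_if_notMem ?_
            intro h0
            have : ¬ (0 ≤ (0:ℤ) - k ∧ (0:ℤ) - k ≤ (L:ℤ)) := fun hcon => h0 (hmemim 0 hcon)
            rw [if_neg this, zero_mul]
        _ = ∑ j ∈ Finset.range (L+1),
              (if 0 ≤ (k + (j:ℤ)) - k ∧ (k + (j:ℤ)) - k ≤ (L:ℤ) then ((L.choose ((k + (j:ℤ))-k).toNat : ℕ) : ZMod 2) else 0) * x (a + (k + (j:ℤ))) 0 :=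
            Finset.sum_image hinjim
        _ = ∑ j ∈ Finset.range (L+1), ((L.choose j : ℕ) : ZMod 2) * x ((a + k) + (j:ℤ)) 0 := by
            refine Finset.sum_congr rfl fun j hj => ?_
            have hj' : (j:ℤ) ≤ (L:ℤ) := by
              have := Finset.mem_range.1 hj
              omega
            have h1 : 0 ≤ (k + (j:ℤ)) - k ∧ (k + (j:ℤ)) - k ≤ (L:ℤ) := by omega
            have h2 : ((k + (j:ℤ)) - k).toNat = j := by omega
            rw [if_pos h1, h2]
            congr 2
            ring
        _ = x (a + k) (0 + (L:ℕ)) := (antider hx3 L (a+k) 0).symm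
    have hper : x (a + k) (0 + (L:ℕ)) = x a 0 := by
      have : x (a+k) (0+l) = x a 0 := by
        have := congrFun (congrFun hxp a) 0
        rwa [shift_apply] at this
      rwa [hL]
    rw [hsplit, hpart2, hpart1, hper]
    exact zmod2_add_self _
  -- injectivity from window values
  set N : ℕ := (M - m).toNat with hNdef
  have hinj : ∀ x ∈ Xset ∩ Per k l, ∀ y ∈ Xset ∩ Per k l,
      (∀ j : ℤ, 0 ≤ j → j < M - m → x j 0 = y j 0) → x = y := by
    intro x hx y hy hwin
    have hg : ∀ b : ℤ, x b 0 + y b 0 = 0 := by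
      refine rec_unique c s hsupp M m hcM hcm hMtop hmbot (fun b => x b 0 + y b 0) ?_ ?_
      · intro a
        have e : ∑ i ∈ s, c i * (x (a+i) 0 + y (a+i) 0)
            = (∑ i ∈ s, c i * x (a+i) 0) + (∑ i ∈ s, c i * y (a+i) 0) := by
          rw [← Finset.sum_add_distrib]
          refine Finset.sum_congr rfl fun i _ => ?_
          ring
        rw [e, hrowrec x hx a, hrowrec y hy a, add_zero]
      · intro b hb1 hb2
        show x b 0 + y b 0 = 0
        rw [hwin b hb1 hb2]
        exact zmod2_add_self _
    have hrows : ∀ b : ℤ, x b 0 = y b 0 := by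
      intro b
      have := hg b
      have h2 := zmod2_add_self (y b 0)
      calc x b 0 = x b 0 + (y b 0 + y b 0) := by rw [h2, add_zero]
        _ = (x b 0 + y b 0) + y b 0 := by ring
        _ = 0 + y b 0 := by rw [this]
        _ = y b 0 := by rw [zero_add]
    -- propagate to the whole configuration
    funext a b
    set t : ℤ := ((-b).toNat : ℤ) with htdef
    have ht0 : 0 ≤ t := Int.natCast_nonneg _
    have htb : 0 ≤ b + t * l := by
      rcases le_or_gt 0 b with h | h
      · have : t = 0 ∨ 0 ≤ t * l := Or.inr (mul_nonneg ht0 (by omega))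
        nlinarith
      · have ht : t = -b := by omega
        rw [ht]
        nlinarith
    set n : ℕ := (b + t * l).toNat with hndef
    have hn : (n:ℤ) = b + t * l := Int.toNat_of_nonneg htb
    have hxiter := per_iterate hx.2 t
    have hyiter := per_iterate hy.2 t
    have ex : x a b = x (a + t*k) (0 + (n:ℕ)) := by
      have := congrFun (congrFun hxiter a) b
      rw [shift_apply] at this
      rw [← this]
      congr 1
      omega
    have ey : y a b = y (a + t*k) (0 + (n:ℕ)) := by
      have := congrFun (congrFun hyiter a) b
      rw [shift_apply] at this
      rw [← this]
      congr 1
      omega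
    rw [ex, ey, antider hx.1 n (a + t*k) 0, antider hy.1 n (a + t*k) 0]
    refine Finset.sum_congr rfl fun i _ => ?_
    rw [hrows]
  -- conclude countability via the finite window map
  have hfin : Finite ↥(Xset ∩ Per k l) := by
    refine Finite.of_injective (fun x : ↥(Xset ∩ Per k l) => fun j : Fin N => x.1 (j:ℤ) 0) ?_
    intro x y hxy
    apply Subtype.ext
    refine hinj x.1 x.2 y.1 y.2 ?_
    intro j hj1 hj2
    have hjN : j.toNat < N := by omega
    have := congrFun hxy ⟨j.toNat, hjN⟩
    simpa [Int.toNat_of_nonneg hj1] using this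
  exact (Set.toFinite _).countable

end PerMain
-- ============ reductions and a.e. aperiodicity ============
section Reduce

lemma frob {x : Config} (hx : threeDot x) (s : ℕ) (a b : ℤ) :
    x a (b + 2^s) = x a b + x (a + 2^s) b := by
  induction s generalizing a b with
  | zero =>
    norm_num
    exact upD hx a b
  | succ n ih =>
    have e : (2^(n+1) : ℤ) = 2^n + 2^n := by ring
    rw [e]
    have h1 : x a (b + (2^n + 2^n)) = x a ((b + 2^n) + 2^n) := by ring_nf
    rw [h1, ih a (b + 2^n), ih a b, ih (a + 2^n) b]
    have h2 : x (a + (2^n + 2^n)) b = x (a + 2^n + 2^n) b := by ring_nf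
    rw [h2]
    have hc := zmod2_add_self (x (a + 2^n) b)
    calc x a b + x (a + 2^n) b + (x (a + 2^n) b + x (a + 2^n + 2^n) b)
        = x a b + ((x (a + 2^n) b + x (a + 2^n) b) + x (a + 2^n + 2^n) b) := by ring
      _ = x a b + x (a + 2^n + 2^n) b := by rw [hc, zero_add]

lemma exists_pow_diff (n : ℕ) (hn : 0 < n) :
    ∃ s s' : ℕ, s < s' ∧ (n:ℤ) ∣ (2^s' - 2^s : ℤ) := by
  classical
  have hmaps : ∀ s ∈ Finset.range (n+1), (2^s % n) ∈ Finset.range n := by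
    intro s _
    exact Finset.mem_range.2 (Nat.mod_lt _ hn)
  have hcard : (Finset.range n).card < (Finset.range (n+1)).card := by
    simp
  obtain ⟨a, ha, b, hb, hab, heq⟩ :=
    Finset.exists_ne_map_eq_of_card_lt_of_maps_to hcard hmaps
  -- wlog a < b
  have key : ∀ a b : ℕ, a < b → 2^a % n = 2^b % n → ∃ s s' : ℕ, s < s' ∧ (n:ℤ) ∣ (2^s' - 2^s : ℤ) := by
    intro a b hab heq
    refine ⟨a, b, hab, ?_⟩
    have hmod : (2^a : ℕ) ≡ 2^b [MOD n] := heq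
    have := hmod.dvd
    push_cast at this
    exact this
  rcases lt_or_gt_of_ne hab with h | h
  · exact key a b h heq
  · exact key b a h heq.symm

lemma reduce_vert (l : ℤ) (hl : 0 < l) :
    ∃ D : ℤ, 0 < D ∧ ∀ x ∈ Xset ∩ Per 0 l, x ∈ Per D D := by
  obtain ⟨s, s', hss', hdvd⟩ := exists_pow_diff l.toNat (by omega)
  rw [Int.toNat_of_nonneg (by omega : (0:ℤ) ≤ l)] at hdvd
  refine ⟨2^s' - 2^s, by
    have : (2:ℤ)^s < 2^s' := by
      exact pow_lt_pow_right₀ (by norm_num) hss'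
    omega, ?_⟩
  rintro x ⟨hx3, hxp⟩
  set D : ℤ := 2^s' - 2^s with hD
  obtain ⟨t, ht⟩ := hdvd
  have hperD : x ∈ Per 0 D := by
    have := per_iterate hxp t
    rw [show t * 0 = 0 from by ring, show t * l = D from by rw [mul_comm]; exact ht.symm] at this
    exact this
  -- horizontal period D
  have hhor : ∀ a b : ℤ, x (a + D) b = x a b := by
    have hkey : ∀ a b : ℤ, x (a + 2^s') b = x (a + 2^s) b := by
      intro a b
      have h1 : x a (b + 2^s') = x a b + x (a + 2^s') b := frob hx3 s' a b
      have h2 : x a (b + 2^s') = x a (b + 2^s) := by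
        have := congrFun (congrFun hperD a) (b + 2^s)
        rw [shift_apply] at this
        rw [show a + 0 = a from by ring] at this
        rw [← this]
        congr 1
        rw [hD]; ring
      have h3 : x a (b + 2^s) = x a b + x (a + 2^s) b := frob hx3 s a b
      have := h1.symm.trans (h2.trans h3)
      exact add_left_cancel this
    intro a b
    have := hkey (a - 2^s) b
    rw [show a - 2^s + 2^s' = a + D from by rw [hD]; ring, show a - 2^s + 2^s = a from by ring] at this
    exact this
  have hperH : x ∈ Per D 0 := by
    funext a b
    rw [shift_apply, add_zero]
    exact hhor a b
  -- combine
  show shift D D x = x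
  have : shift D D x = shift D 0 (shift 0 D x) := by
    rw [shift_shift]; norm_num
  rw [this, hperD, hperH]

lemma reduce_antidiag (k : ℤ) (hk : k ≠ 0) :
    ∃ D : ℤ, 0 < D ∧ ∀ x ∈ Xset ∩ Per k (-k), x ∈ Per D 0 := by
  obtain ⟨s, s', hss', hdvd⟩ := exists_pow_diff k.natAbs (by omega)
  rw [Int.natAbs_dvd] at hdvd
  refine ⟨2^s' - 2^s, by
    have : (2:ℤ)^s < 2^s' := pow_lt_pow_right₀ (by norm_num) hss'
    omega, ?_⟩
  rintro x ⟨hx3, hxp⟩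
  set D : ℤ := 2^s' - 2^s with hD
  obtain ⟨t, ht⟩ := hdvd
  have hperD : x ∈ Per D (-D) := by
    have := per_iterate hxp t
    rw [show t * k = D from by rw [mul_comm]; exact ht.symm,
      show t * (-k) = -D from by rw [show t * (-k) = -(k*t) from by ring, ← ht]] at this
    exact this
  have happ : ∀ c d : ℤ, x (c + D) (d - D) = x c d := by
    intro c d
    have := congrFun (congrFun hperD c) d
    rw [shift_apply] at this
    rw [show d - D = d + -D from by ring]
    exact this
  have hhor : ∀ a b : ℤ, x (a + D) b = x a b := by
    have hkey : ∀ a b : ℤ, x a b = x (a - D) b := by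
      intro a b
      have h1 : x a (b + 2^s) = x a b + x (a + 2^s) b := frob hx3 s a b
      have h2 : x a ((b - D) + 2^s') = x a (b - D) + x (a + 2^s') (b - D) := frob hx3 s' a (b - D)
      have e1 : (b - D) + 2^s' = b + 2^s := by rw [hD]; ring
      rw [e1] at h2
      have e2 : x a (b - D) = x (a - D) b := by
        have := happ (a - D) b
        rw [show a - D + D = a from by ring] at this
        exact this
      have e3 : x (a + 2^s') (b - D) = x (a + 2^s) b := by
        have := happ (a + 2^s) b
        rw [show a + 2^s + D = a + 2^s' from by rw [hD]; ring] at this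
        exact this
      rw [e2, e3] at h2
      have := h1.symm.trans h2
      exact add_right_cancel this
    intro a b
    have := hkey (a + D) b
    rw [show a + D - D = a from by ring] at this
    exact this
  funext a b
  rw [shift_apply, add_zero]
  exact hhor a b

-- transpose
def trC (x : Config) : Config := fun a b => x b a

lemma trC_injective : Function.Injective trC := by
  intro x y h
  funext a b
  exact congrFun (congrFun h b) a

lemma trC_threeDot {x : Config} (hx : threeDot x) : threeDot (trC x) := by
  intro k l
  have := hx l k
  calc trC x k l + trC x (k+1) l + trC x k (l+1)
      = x l k + x (l+1) k + x l (k+1) := by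
        show x l k + x l (k+1) + x (l+1) k = x l k + x (l+1) k + x l (k+1)
        ring
    _ = 0 := this

lemma trC_per {x : Config} {k l : ℤ} (h : x ∈ Per k l) : trC x ∈ Per l k := by
  funext a b
  show x (b + k) (a + l) = x b a
  have := congrFun (congrFun h b) a
  rw [shift_apply] at this
  exact this

lemma countable_vert (l : ℤ) (hl : 0 < l) : (Xset ∩ Per 0 l).Countable := by
  obtain ⟨D, hD, hred⟩ := reduce_vert l hl
  refine (countable_main D D hD (by omega) (by omega)).mono ?_
  intro x hx
  exact ⟨hx.1, hred x hx⟩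

lemma countable_horiz (k : ℤ) (hk : 0 < k) : (Xset ∩ Per k 0).Countable := by
  refine ((countable_vert k hk).preimage trC_injective).mono ?_
  intro x hx
  exact ⟨trC_threeDot hx.1, trC_per hx.2⟩

lemma countable_per (k l : ℤ) (h : ¬ (k = 0 ∧ l = 0)) : (Xset ∩ Per k l).Countable := by
  have main_lpos : ∀ k' l' : ℤ, 0 < l' → (Xset ∩ Per k' l').Countable := by
    intro k' l' hl'
    by_cases hk' : k' = 0
    · rw [hk']
      exact countable_vert l' hl'
    · by_cases hkl' : k' + l' = 0
      · -- antidiagonal case : l' = -k'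
        obtain ⟨D, hD, hred⟩ := reduce_antidiag k' hk'
        have hsub : Xset ∩ Per k' l' ⊆ Xset ∩ Per D 0 := by
          intro x hx
          refine ⟨hx.1, hred x ⟨hx.1, ?_⟩⟩
          rw [show -k' = l' from by omega]
          exact hx.2
        exact (countable_horiz D hD).mono hsub
      · exact countable_main k' l' hl' hk' hkl'
  rcases lt_trichotomy l 0 with hl | hl | hl
  · refine (main_lpos (-k) (-l) (by omega)).mono ?_
    intro x hx
    exact ⟨hx.1, per_neg hx.2⟩
  · subst hl
    have hk : k ≠ 0 := fun hk0 => h ⟨hk0, rfl⟩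
    rcases lt_or_gt_of_ne hk with hneg | hpos
    · refine ((countable_horiz (-k) (by omega)).mono ?_)
      intro x hx
      refine ⟨hx.1, ?_⟩
      have := per_neg hx.2
      rwa [neg_zero] at this
    · exact countable_horiz k hpos
  · exact main_lpos k l hl

lemma measurableSet_Per (k l : ℤ) : MeasurableSet (Per k l) :=
  measurableSet_eqfun (measurable_shift k l) measurable_id

lemma shift_injective (k l : ℤ) : Function.Injective (shift k l) := by
  intro x y h
  have := congrArg (shift (-k) (-l)) h
  rw [shift_shift, shift_shift] at this
  norm_num at this
  rwa [shift_zero, shift_zero] at this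

lemma per_invariant_T (k l : ℤ) : Tm ⁻¹' (Per k l) = Per k l := by
  ext x
  simp only [Set.mem_preimage, Per, Set.mem_setOf_eq]
  show shift k l (shift 1 0 x) = shift 1 0 x ↔ _
  rw [shift_shift]
  constructor
  · intro h
    apply shift_injective 1 0
    rw [← h, shift_shift]
    ring_nf
  · intro h
    have : shift (k+1) (l+0) x = shift 1 0 (shift k l x) := by
      rw [shift_shift]; ring_nf
    rw [this, h]

lemma per_invariant_S (k l : ℤ) : Sm ⁻¹' (Per k l) = Per k l := by
  ext x
  simp only [Set.mem_preimage, Per, Set.mem_setOf_eq]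
  show shift k l (shift 0 1 x) = shift 0 1 x ↔ _
  rw [shift_shift]
  constructor
  · intro h
    apply shift_injective 0 1
    rw [← h, shift_shift]
    ring_nf
  · intro h
    have : shift (k+0) (l+1) x = shift 0 1 (shift k l x) := by
      rw [shift_shift]; ring_nf
    rw [this, h]

lemma ae_aperiodic (μ : Measure Config) [IsProbabilityMeasure μ]
    (hX : μ Xset = 1)
    (hatomless : ∀ c : Config, μ {c} = 0)
    (herg : ∀ A : Set Config, MeasurableSet A → Tm ⁻¹' A = A → Sm ⁻¹' A = A →
      μ A = 0 ∨ μ A = 1) :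
    ∀ᵐ x ∂μ, Aperiodic x := by
  haveI : MeasureTheory.NullSingletonClass μ := ⟨hatomless⟩
  have hper0 : ∀ k l : ℤ, ¬ (k = 0 ∧ l = 0) → μ (Per k l) = 0 := by
    intro k l h
    rcases herg (Per k l) (measurableSet_Per k l) (per_invariant_T k l) (per_invariant_S k l)
      with h0 | h1
    · exact h0
    · exfalso
      have hcnt : μ (Xset ∩ Per k l) = 0 := (countable_per k l h).measure_zero μ
      have hXc : μ Xsetᶜ = 0 := by
        have h := measure_compl measurableSet_Xset (measure_ne_top μ Xset)
        rw [hX, measure_univ] at h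
        simpa using h
      have : (1:ENNReal) ≤ 0 := by
        calc (1:ENNReal) = μ (Per k l) := h1.symm
          _ ≤ μ (Xset ∩ Per k l) + μ Xsetᶜ := by
              refine le_trans (measure_mono ?_) (measure_union_le _ _)
              intro x hx
              by_cases hxX : x ∈ Xset
              · exact Or.inl ⟨hxX, hx⟩
              · exact Or.inr hxX
          _ = 0 := by rw [hcnt, hXc, add_zero]
      simp at this
  set bad : Set Config := ⋃ (p : ℤ × ℤ), ⋃ (_ : ¬ (p.1 = 0 ∧ p.2 = 0)), Per p.1 p.2 with hbad
  have hbadnull : μ bad = 0 := by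
    refine measure_iUnion_null fun p => measure_iUnion_null fun hp => hper0 p.1 p.2 hp
  have := measure_eq_zero_iff_ae_notMem.mp hbadnull
  refine this.mono ?_
  intro x hx k l hshift
  by_contra hcon
  refine hx ?_
  rw [hbad]
  refine Set.mem_iUnion.2 ⟨(k, l), Set.mem_iUnion.2 ⟨hcon, hshift⟩⟩

end Reduce
-- ============ final assembly ============
theorem stmt19' (μ : Measure Config) [IsProbabilityMeasure μ]
    (hX : μ Xset = 1)
    (hT : MeasurePreserving Tm μ μ) (hS : MeasurePreserving Sm μ μ)
    (hatomless : ∀ c : Config, μ {c} = 0)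
    (herg : ∀ A : Set Config, MeasurableSet A → Tm ⁻¹' A = A → Sm ⁻¹' A = A →
      μ A = 0 ∨ μ A = 1)
    (hF : μ Fset = 0) :
    ∀ᵐ x ∂μ, x ∈ Yset →
      (∃ k ∈ Lset x, 0 < k) ∧ (∃ k ∈ Lset x, k < 0) ∧ (Kset x).Finite := by
  have hap := ae_aperiodic μ hX hatomless herg
  have hm2 := M2_ae (μ := μ) hT hS
  have haeA := measure_eq_zero_iff_ae_notMem.mp (hopf_above (μ := μ) hT hS)
  have haeB := measure_eq_zero_iff_ae_notMem.mp (hopf_below (μ := μ) hT hS)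
  have haeF := measure_eq_zero_iff_ae_notMem.mp hF
  filter_upwards [hap, hm2, haeA, haeB, haeF]
  intro x hapx hm2x hxA hxB hxF hY
  have h00 : x 0 0 = 1 := hY.2
  obtain ⟨hP1, hP2⟩ := hm2x h00
  -- K is bounded above
  have hKub : ∃ B : ℤ, ∀ k ∈ Kset x, k ≤ B := by
    by_contra hcon
    push_neg at hcon
    have hUB : x ∈ UBset := by
      intro N
      obtain ⟨k, hkK, hk⟩ := hcon N
      exact ⟨k, le_of_lt hk, hkK⟩
    by_cases hDB : x ∈ DBset
    · exact hxF (case4 hY hapx (fun N => by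
        obtain ⟨k, h1, h2⟩ := hUB N; exact ⟨k, h1, h2⟩)
        (fun N => by obtain ⟨k, h1, h2⟩ := hDB N; exact ⟨k, h1, h2⟩))
    · -- K bounded below with least element
      have hbdd : ∃ b : ℤ, ∀ z : ℤ, z ∈ Kset x → b ≤ z := by
        simp only [DBset, Set.mem_setOf_eq] at hDB
        push_neg at hDB
        obtain ⟨N, hN⟩ := hDB
        refine ⟨N + 1, fun z hz => ?_⟩
        by_contra hlt
        exact (hN z (by omega)) hz
      obtain ⟨b, hbK, hbmin⟩ :=
        Int.exists_least_of_bdd (P := fun z => z ∈ Kset x)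
          (by obtain ⟨b, hb⟩ := hbdd; exact ⟨b, hb⟩) ⟨0, zero_mem_Kset hY⟩
      exact hxA ⟨hY, hUB, b, hbK, hbmin⟩
  -- K is bounded below
  have hKlb : ∃ B : ℤ, ∀ k ∈ Kset x, B ≤ k := by
    by_contra hcon
    push_neg at hcon
    have hDB : x ∈ DBset := by
      intro N
      obtain ⟨k, hkK, hk⟩ := hcon N
      exact ⟨k, le_of_lt hk, hkK⟩
    by_cases hUB : x ∈ UBset
    · exact hxF (case4 hY hapx (fun N => by
        obtain ⟨k, h1, h2⟩ := hUB N; exact ⟨k, h1, h2⟩)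
        (fun N => by obtain ⟨k, h1, h2⟩ := hDB N; exact ⟨k, h1, h2⟩))
    · have hbdd : ∃ b : ℤ, ∀ z : ℤ, z ∈ Kset x → z ≤ b := by
        simp only [UBset, Set.mem_setOf_eq] at hUB
        push_neg at hUB
        obtain ⟨N, hN⟩ := hUB
        refine ⟨N - 1, fun z hz => ?_⟩
        by_contra hlt
        exact (hN z (by omega)) hz
      obtain ⟨b, hbK, hbmax⟩ :=
        Int.exists_greatest_of_bdd (P := fun z => z ∈ Kset x)
          (by obtain ⟨b, hb⟩ := hbdd; exact ⟨b, hb⟩) ⟨0, zero_mem_Kset hY⟩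
      exact hxB ⟨hY, hDB, b, hbK, hbmax⟩
  obtain ⟨B1, hB1⟩ := hKub
  obtain ⟨B2, hB2⟩ := hKlb
  have h0K := zero_mem_Kset hY
  have hB1' : 0 ≤ B1 := hB1 0 h0K
  have hB2' : B2 ≤ 0 := hB2 0 h0K
  refine ⟨?_, ?_, ?_⟩
  · obtain ⟨j, hjge, hj1⟩ := hP1 (B1 + 1)
    refine ⟨j, ⟨Yset_shift hY.1 hj1, fun hc => ?_⟩, by omega⟩
    have : j ∈ Kset x := hc
    have := hB1 j this
    omega
  · obtain ⟨j, hjle, hj1⟩ := hP2 (B2 - 1)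
    refine ⟨j, ⟨Yset_shift hY.1 hj1, fun hc => ?_⟩, by omega⟩
    have : j ∈ Kset x := hc
    have := hB2 j this
    omega
  · refine (Set.finite_Icc B2 B1).subset ?_
    intro k hk
    exact Set.mem_Icc.2 ⟨hB2 k hk, hB1 k hk⟩
/-- If `μ(F) = 0`, then for `μ`-a.e. `x ∈ Y` the set `L(x)` contains both
positive and negative elements; in particular `K(x)` is finite a.e. -/
theorem stmt19 (μ : Measure Config) [IsProbabilityMeasure μ]
    (hX : μ Xset = 1)
    (hT : MeasurePreserving Tm μ μ) (hS : MeasurePreserving Sm μ μ)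
    (hatomless : ∀ c : Config, μ {c} = 0)
    (herg : ∀ A : Set Config, MeasurableSet A → Tm ⁻¹' A = A → Sm ⁻¹' A = A →
      μ A = 0 ∨ μ A = 1)
    (hF : μ Fset = 0) :
    ∀ᵐ x ∂μ, x ∈ Yset →
      (∃ k ∈ Lset x, 0 < k) ∧ (∃ k ∈ Lset x, k < 0) ∧ (Kset x).Finite :=
  stmt19' μ hX hT hS hatomless herg hF
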